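/- Let x_k ∈ ℝⁿ, let H_k = ∇²f(x_k) + ([−λ_min(∇²f(x_k))]₊ + c + μ₁·min{1, ‖G(x_k)‖^δ})·I with c > 0, τ ∈ (0, c), μ₁ ∈ (0,1], μ₂ ∈ (0, μ₁], δ ∈ [0,1], let x̂_k minimize x ↦ f(x_k) + ⟨∇f(x_k), x − x_k⟩ + g(x) + (1/2)⟨x − x_k, H_k(x − x_k)⟩ + ⟨ε_k, x − x_k⟩ with ‖ε_k‖ ≤ (μ₂/2)·min{1, ‖G(x_k)‖^δ}·‖x̂_k − x_k‖, set d_k = x̂_k − x_k, and suppose ∇²f is L_C-Lipschitz on an open set containing the segment from x_k to x_k + d_k. Then for every θ ∈ (0,1) and every integer j ≥ 0, φ(x_k + θ^j d_k) − φ(x_k) + (τ θ^j/2)‖d_k‖² ≤ −(θ^j/2)·‖d_k‖²·((c − τ) − (L_C/3)‖d_k‖). In particular, if ‖d_k‖ ≤ 3(c − τ)/L_C then the unit step is accepted: φ(x_k + d_k) ≤ φ(x_k) − (τ/2)‖d_k‖². -/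

import Mathlib

open scoped RealInnerProductSpace

lemma taylor_cube' {n : ℕ} (f : EuclideanSpace ℝ (Fin n) → ℝ) (hf : ContDiff ℝ 2 f)
    (Hess : EuclideanSpace ℝ (Fin n) → (EuclideanSpace ℝ (Fin n) →L[ℝ] EuclideanSpace ℝ (Fin n)))
    (hHess : ∀ y, HasFDerivAt (gradient f) (Hess y) y)
    (x v : EuclideanSpace ℝ (Fin n)) (L : ℝ)
    (hlip : ∀ t ∈ Set.Icc (0:ℝ) 1, ‖Hess (x + t • v) - Hess x‖ ≤ L * (t * ‖v‖)) :
    f (x + v) ≤ f x + ⟪gradient f x, v⟫ + (1/2) * ⟪Hess x v, v⟫ + L / 6 * ‖v‖ ^ 3 := by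
  set γ : ℝ → EuclideanSpace ℝ (Fin n) := fun t => x + t • v with hγ
  have hγd : ∀ t : ℝ, HasDerivAt γ v t := by
    intro t
    simpa [hγ] using ((hasDerivAt_id t).smul_const v).const_add x
  have hfd : ∀ y, HasFDerivAt f ((InnerProductSpace.toDual ℝ _) (gradient f y)) y := by
    intro y
    exact ((hf.differentiable (by norm_num)) y).hasGradientAt.hasFDerivAt
  set h : ℝ → ℝ := fun t => f (γ t) with hh
  set h1 : ℝ → ℝ := fun t => ⟪gradient f (γ t), v⟫ with hh1
  set h2 : ℝ → ℝ := fun t => ⟪Hess (γ t) v, v⟫ with hh2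
  have hD : ∀ t : ℝ, HasDerivAt h (h1 t) t := by
    intro t
    have := (hfd (γ t)).comp_hasDerivAt t (hγd t)
    rw [InnerProductSpace.toDual_apply_apply] at this
    exact this
  have hD1 : ∀ t : ℝ, HasDerivAt h1 (h2 t) t := by
    intro t
    have hcomp : HasFDerivAt (fun y => ⟪gradient f y, v⟫)
        (((innerSL ℝ).flip v).comp (Hess (γ t))) (γ t) :=
      (((innerSL ℝ).flip v).hasFDerivAt).comp (γ t) (hHess (γ t))
    exact hcomp.comp_hasDerivAt t (hγd t)
  have hγ0 : γ 0 = x := by simp [hγ]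
  have h2bound : ∀ t ∈ Set.Icc (0:ℝ) 1, h2 t - h2 0 ≤ L * ‖v‖ ^ 3 * t := by
    intro t ht
    have heq : h2 t - h2 0 = ⟪(Hess (γ t) - Hess x) v, v⟫ := by
      simp only [hh2, hγ0, ContinuousLinearMap.sub_apply, inner_sub_left]
    rw [heq]
    calc ⟪(Hess (γ t) - Hess x) v, v⟫ ≤ ‖(Hess (γ t) - Hess x) v‖ * ‖v‖ :=
          real_inner_le_norm _ _
      _ ≤ (‖Hess (γ t) - Hess x‖ * ‖v‖) * ‖v‖ :=
          mul_le_mul_of_nonneg_right ((Hess (γ t) - Hess x).le_opNorm v) (norm_nonneg v)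
      _ ≤ ((L * (t * ‖v‖)) * ‖v‖) * ‖v‖ :=
          mul_le_mul_of_nonneg_right
            (mul_le_mul_of_nonneg_right (hlip t ht) (norm_nonneg v))
            (norm_nonneg v)
      _ = L * ‖v‖ ^ 3 * t := by ring
  set q1 : ℝ → ℝ := fun t => h1 t - h1 0 - h2 0 * t - (L * ‖v‖ ^ 3 / 2) * t ^ 2 with hq1
  have hq1D : ∀ t : ℝ, HasDerivAt q1 (h2 t - h2 0 - L * ‖v‖ ^ 3 * t) t := by
    intro t
    have := (((hD1 t).sub_const (h1 0)).sub ((hasDerivAt_id t).const_mul (h2 0))).sub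
      ((hasDerivAt_pow 2 t).const_mul (L * ‖v‖ ^ 3 / 2))
    refine this.congr_deriv ?_
    push_cast
    ring
  have hq1le : ∀ t ∈ Set.Icc (0:ℝ) 1, q1 t ≤ 0 := by
    have hanti : AntitoneOn q1 (Set.Icc (0:ℝ) 1) := by
      apply antitoneOn_of_deriv_nonpos (convex_Icc 0 1)
      · exact fun s _ => ((hq1D s).continuousAt).continuousWithinAt
      · exact fun s _ => ((hq1D s).differentiableAt).differentiableWithinAt
      · intro s hs
        rw [(hq1D s).deriv]
        rw [interior_Icc] at hs
        have := h2bound s ⟨le_of_lt hs.1, le_of_lt hs.2⟩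
        linarith
    intro t ht
    have h0 : q1 0 = 0 := by simp [hq1]
    have := hanti (Set.left_mem_Icc.2 one_pos.le) ht ht.1
    linarith
  set q : ℝ → ℝ := fun t => h t - h 0 - h1 0 * t - (h2 0 / 2) * t ^ 2 - (L * ‖v‖ ^ 3 / 6) * t ^ 3
    with hq
  have hqD : ∀ t : ℝ, HasDerivAt q (q1 t) t := by
    intro t
    have := ((((hD t).sub_const (h 0)).sub ((hasDerivAt_id t).const_mul (h1 0))).sub
      ((hasDerivAt_pow 2 t).const_mul (h2 0 / 2))).sub
      ((hasDerivAt_pow 3 t).const_mul (L * ‖v‖ ^ 3 / 6))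
    refine this.congr_deriv ?_
    simp [hq1]
    ring
  have hqle : q 1 ≤ 0 := by
    have hanti : AntitoneOn q (Set.Icc (0:ℝ) 1) := by
      apply antitoneOn_of_deriv_nonpos (convex_Icc 0 1)
      · exact fun s _ => ((hqD s).continuousAt).continuousWithinAt
      · exact fun s _ => ((hqD s).differentiableAt).differentiableWithinAt
      · intro s hs
        rw [(hqD s).deriv]
        rw [interior_Icc] at hs
        exact hq1le s ⟨le_of_lt hs.1, le_of_lt hs.2⟩
    have h0 : q 0 = 0 := by simp [hq]
    have := hanti (Set.left_mem_Icc.2 one_pos.le) (Set.right_mem_Icc.2 one_pos.le) zero_le_one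
    linarith
  have hγ1 : γ 1 = x + v := by simp [hγ]
  have hval : q 1 = h 1 - h 0 - h1 0 - (h2 0 / 2) - (L * ‖v‖ ^ 3 / 6) := by
    simp [hq]
  have hh0 : h 0 = f x := by show f (γ 0) = f x; rw [hγ0]
  have hh1v : h 1 = f (x + v) := by show f (γ 1) = f (x + v); rw [hγ1]
  have hg0 : h1 0 = ⟪gradient f x, v⟫ := by show ⟪gradient f (γ 0), v⟫ = _; rw [hγ0]
  have hH0 : h2 0 = ⟪Hess x v, v⟫ := by show ⟪Hess (γ 0) v, v⟫ = _; rw [hγ0]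
  rw [hval, hh0, hh1v, hg0, hH0] at hqle
  linarith

set_option maxHeartbeats 1000000 in
/-- Sufficient decrease along the Newton direction; in particular the unit step is
accepted whenever `‖d_k‖ ≤ 3(c − τ)/L_C`. -/
theorem stmt13 {n : ℕ}
    (f g : EuclideanSpace ℝ (Fin n) → ℝ)
    (hf : ContDiff ℝ 2 f)
    (hg : ConvexOn ℝ Set.univ g) (hgc : Continuous g)
    (proxg : EuclideanSpace ℝ (Fin n) → EuclideanSpace ℝ (Fin n))
    (hprox : ∀ y, IsMinOn (fun u => g u + (1 / 2) * ‖u - y‖ ^ 2) Set.univ (proxg y))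
    (hproxU : ∀ y u, IsMinOn (fun u => g u + (1 / 2) * ‖u - y‖ ^ 2) Set.univ u → u = proxg y)
    (G : EuclideanSpace ℝ (Fin n) → EuclideanSpace ℝ (Fin n))
    (hG : ∀ y, G y = y - proxg (y - gradient f y))
    (Hess : EuclideanSpace ℝ (Fin n) → (EuclideanSpace ℝ (Fin n) →L[ℝ] EuclideanSpace ℝ (Fin n)))
    (hHess : ∀ y, HasFDerivAt (gradient f) (Hess y) y)
    (xk : EuclideanSpace ℝ (Fin n))
    (c τ μ₁ μ₂ δ : ℝ) (hc : 0 < c) (hτ : τ ∈ Set.Ioo 0 c)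
    (hμ₁ : μ₁ ∈ Set.Ioc (0 : ℝ) 1) (hμ₂ : μ₂ ∈ Set.Ioc (0 : ℝ) μ₁)
    (hδ : δ ∈ Set.Icc (0 : ℝ) 1)
    (lam : ℝ) (hlam : IsGreatest {t : ℝ | ∀ v, t * ‖v‖ ^ 2 ≤ ⟪v, Hess xk v⟫} lam)
    (H : EuclideanSpace ℝ (Fin n) →L[ℝ] EuclideanSpace ℝ (Fin n))
    (hH : H = Hess xk + (max (-lam) 0 + c + μ₁ * min 1 (‖G xk‖ ^ δ))
        • ContinuousLinearMap.id ℝ (EuclideanSpace ℝ (Fin n)))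
    (εk xhat : EuclideanSpace ℝ (Fin n))
    (hmin : IsMinOn (fun y => f xk + ⟪gradient f xk, y - xk⟫ + g y
        + (1 / 2) * ⟪y - xk, H (y - xk)⟫ + ⟪εk, y - xk⟫) Set.univ xhat)
    (herr : ‖εk‖ ≤ (μ₂ / 2) * min 1 (‖G xk‖ ^ δ) * ‖xhat - xk‖)
    (d : EuclideanSpace ℝ (Fin n)) (hd : d = xhat - xk)
    (LC : ℝ) (hLC : 0 ≤ LC)
    (U : Set (EuclideanSpace ℝ (Fin n))) (hU : IsOpen U) (hseg : segment ℝ xk (xk + d) ⊆ U)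
    (hLip : ∀ u ∈ U, ∀ v ∈ U, ‖Hess u - Hess v‖ ≤ LC * ‖u - v‖) :
    (∀ θ ∈ Set.Ioo (0 : ℝ) 1, ∀ j : ℕ,
      (f (xk + θ ^ j • d) + g (xk + θ ^ j • d)) - (f xk + g xk)
          + (τ * θ ^ j / 2) * ‖d‖ ^ 2
        ≤ -(θ ^ j / 2) * ‖d‖ ^ 2 * ((c - τ) - (LC / 3) * ‖d‖)) ∧
    (‖d‖ ≤ 3 * (c - τ) / LC →
      f (xk + d) + g (xk + d) ≤ f xk + g xk - (τ / 2) * ‖d‖ ^ 2) := by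
  have hm0 : 0 ≤ min 1 (‖G xk‖ ^ δ) :=
    le_min zero_le_one (Real.rpow_nonneg (norm_nonneg _) δ)
  -- key inequality from minimality at xk
  have hmk := isMinOn_iff.mp hmin xk (Set.mem_univ xk)
  simp only [sub_self, map_zero, inner_zero_right, inner_zero_left, add_zero, mul_zero] at hmk
  rw [← hd] at hmk
  have hB : ⟪d, H d⟫ = ⟪d, Hess xk d⟫
      + (max (-lam) 0 + c + μ₁ * min 1 (‖G xk‖ ^ δ)) * ‖d‖ ^ 2 := by
    rw [hH, ContinuousLinearMap.add_apply, inner_add_right, ContinuousLinearMap.smul_apply,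
      ContinuousLinearMap.id_apply, real_inner_smul_right, real_inner_self_eq_norm_sq]
  rw [hB] at hmk
  -- error bound
  rw [← hd] at herr
  have hcs : -⟪εk, d⟫ ≤ (μ₂ / 2) * min 1 (‖G xk‖ ^ δ) * ‖d‖ ^ 2 := by
    have h1 : -⟪εk, d⟫ ≤ ‖εk‖ * ‖d‖ := by
      have := abs_real_inner_le_norm εk d
      have h2 := neg_abs_le (⟪εk, d⟫)
      linarith
    have h2 : ‖εk‖ * ‖d‖ ≤ ((μ₂ / 2) * min 1 (‖G xk‖ ^ δ) * ‖d‖) * ‖d‖ :=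
      mul_le_mul_of_nonneg_right herr (norm_nonneg d)
    have : ((μ₂ / 2) * min 1 (‖G xk‖ ^ δ) * ‖d‖) * ‖d‖
        = (μ₂ / 2) * min 1 (‖G xk‖ ^ δ) * ‖d‖ ^ 2 := by ring
    linarith
  have hX : lam * ‖d‖ ^ 2 ≤ ⟪d, Hess xk d⟫ := hlam.1 d
  have hxkU : xk ∈ U := hseg (left_mem_segment ℝ xk (xk + d))
  have main : ∀ θ ∈ Set.Ioo (0 : ℝ) 1, ∀ j : ℕ,
      (f (xk + θ ^ j • d) + g (xk + θ ^ j • d)) - (f xk + g xk)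
          + (τ * θ ^ j / 2) * ‖d‖ ^ 2
        ≤ -(θ ^ j / 2) * ‖d‖ ^ 2 * ((c - τ) - (LC / 3) * ‖d‖) := by
    intro θ hθ j
    set α : ℝ := θ ^ j with hαdef
    have hα : 0 < α := pow_pos hθ.1 j
    have hα1 : α ≤ 1 := pow_le_one₀ hθ.1.le hθ.2.le
    -- Taylor step
    have hlipseg : ∀ t ∈ Set.Icc (0:ℝ) 1,
        ‖Hess (xk + t • (α • d)) - Hess xk‖ ≤ LC * (t * ‖α • d‖) := by
      intro t ht
      have hmem : xk + t • (α • d) ∈ U := by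
        apply hseg
        rw [segment_eq_image']
        refine ⟨t * α, ⟨mul_nonneg ht.1 hα.le, mul_le_one₀ ht.2 hα.le hα1⟩, ?_⟩
        simp [add_sub_cancel_left, smul_smul]
      have := hLip _ hmem xk hxkU
      have heq : xk + t • (α • d) - xk = t • (α • d) := by abel
      rw [heq] at this
      rw [norm_smul, Real.norm_eq_abs, abs_of_nonneg ht.1] at this
      exact this
    have hT := taylor_cube' f hf Hess hHess xk (α • d) LC hlipseg
    have e1 : ⟪gradient f xk, α • d⟫ = α * ⟪gradient f xk, d⟫ := real_inner_smul_right _ _ _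
    have e2 : ⟪Hess xk (α • d), α • d⟫ = α ^ 2 * ⟪d, Hess xk d⟫ := by
      rw [map_smul, real_inner_smul_left, real_inner_smul_right, real_inner_comm]
      ring
    have e3 : ‖α • d‖ = α * ‖d‖ := by rw [norm_smul, Real.norm_eq_abs, abs_of_pos hα]
    rw [e1, e2, e3] at hT
    -- convexity of g
    have hgc2 : g (xk + α • d) ≤ (1 - α) * g xk + α * g xhat := by
      have hpt : (1 - α) • xk + α • xhat = xk + α • d := by rw [hd]; module
      have := hg.2 (Set.mem_univ xk) (Set.mem_univ xhat) (show (0:ℝ) ≤ 1 - α by linarith)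
        hα.le (show (1 - α) + α = 1 by ring)
      rwa [hpt, smul_eq_mul, smul_eq_mul] at this
    -- arithmetic
    have hmax : 0 ≤ (1 - α) * lam + max (-lam) 0 := by
      rcases le_total lam 0 with hl | hl
      · rw [max_eq_left (by linarith : (0:ℝ) ≤ -lam)]
        nlinarith
      · rw [max_eq_right (by linarith : -lam ≤ (0:ℝ))]
        nlinarith
    have hα3 : α ^ 3 ≤ α := by nlinarith
    have hd3 : (0:ℝ) ≤ ‖d‖ ^ 3 := by positivity
    have hkey : ⟪gradient f xk, d⟫ + g xhat - g xk + ⟪εk, d⟫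
        + (1/2) * (⟪d, Hess xk d⟫
          + (max (-lam) 0 + c + μ₁ * min 1 (‖G xk‖ ^ δ)) * ‖d‖ ^ 2) ≤ 0 := by
      linarith
    have K1 := mul_le_mul_of_nonneg_left hkey hα.le
    have K2 := mul_le_mul_of_nonneg_left hcs hα.le
    have K3 : (α / 2 * (1 - α)) * (lam * ‖d‖ ^ 2) ≤ (α / 2 * (1 - α)) * ⟪d, Hess xk d⟫ :=
      mul_le_mul_of_nonneg_left hX (by nlinarith)
    have K4 : 0 ≤ ((1 - α) * lam + max (-lam) 0) * (α / 2 * ‖d‖ ^ 2) :=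
      mul_nonneg hmax (by positivity)
    have K5 : (μ₂ - μ₁) * min 1 (‖G xk‖ ^ δ) * (α / 2 * ‖d‖ ^ 2) ≤ 0 :=
      mul_nonpos_of_nonpos_of_nonneg
        (mul_nonpos_of_nonpos_of_nonneg (by linarith [hμ₂.2]) hm0) (by positivity)
    have K6 : LC / 6 * (α * ‖d‖) ^ 3 ≤ LC / 6 * (α * ‖d‖ ^ 3) := by
      have : (α * ‖d‖) ^ 3 = α ^ 3 * ‖d‖ ^ 3 := by ring
      rw [this]
      exact mul_le_mul_of_nonneg_left (mul_le_mul_of_nonneg_right hα3 hd3) (by positivity)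
    nlinarith [hT, hgc2, K1, K2, K3, K4, K5, K6]
  refine ⟨main, ?_⟩
  intro hdle
  have h1 := main (1/2) (by constructor <;> norm_num) 0
  rw [pow_zero, one_smul] at h1
  have hnn : 0 ≤ (c - τ) - LC / 3 * ‖d‖ := by
    rcases eq_or_lt_of_le hLC with h0 | hpos
    · rw [← h0]
      simp only [zero_div, zero_mul, sub_zero]
      linarith [hτ.2]
    · have hdle' := (le_div_iff₀ hpos).mp hdle
      nlinarith
  have hprod : 0 ≤ ‖d‖ ^ 2 * ((c - τ) - LC / 3 * ‖d‖) := mul_nonneg (sq_nonneg _) hnn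
  nlinarith [h1, hprod]
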